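/- arXiv:2406.16278 — 2 statements merged into one kernel-verified Lean document; each statement's English description precedes it below -/
import Mathlib

section
/- For every (z,w) ∈ ℝ^{2n}×ℝ^m one has Σ_{j=1}^{2n+m+1} ω_j(z,w)² = 1. -/
open MeasureTheory Real Matrix

noncomputable section

/-- Underlying space of the H-type group `G = ℝ^{2n} × ℝ^m`. -/
abbrev HG (n m : ℕ) : Type := (Fin (2*n) → ℝ) × (Fin m → ℝ)

/-- Squared Euclidean norm. -/
def zsq {k : ℕ} (z : Fin k → ℝ) : ℝ := ∑ i, z i ^ 2

/-- Group law of the H-type group determined by the matrices `U`. -/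
def gmul {n m : ℕ} (U : Fin m → Matrix (Fin (2*n)) (Fin (2*n)) ℝ) (ξ η : HG n m) : HG n m :=
  (ξ.1 + η.1, fun k => ξ.2 k + η.2 k + (1/2) * dotProduct ξ.1 ((U k).mulVec η.1))

/-- Group inverse. -/
def ginv {n m : ℕ} (ξ : HG n m) : HG n m := (-ξ.1, -ξ.2)

/-- Homogeneous norm `|(z,w)| = (|z|⁴/16 + |w|²)^{1/4}`. -/
def hnorm {n m : ℕ} (ξ : HG n m) : ℝ := ((zsq ξ.1)^2/16 + zsq ξ.2) ^ ((1:ℝ)/4)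

/-- Homogeneous dimension `Q = 2n + 2m`. -/
def Qh (n m : ℕ) : ℝ := 2*n + 2*m

/-- H-type conditions on the matrices `U^{(1)},…,U^{(m)}`. -/
def IsHType {n m : ℕ} (U : Fin m → Matrix (Fin (2*n)) (Fin (2*n)) ℝ) : Prop :=
  (∀ k, (U k)ᵀ = -(U k)) ∧ (∀ k, U k * (U k)ᵀ = 1) ∧
    (∀ j k, j ≠ k → U j * U k + U k * U j = 0)

/-- The constant `a_{n,m,s}` in the ground-state representation of the energy. -/
def aC (n m : ℕ) (s : ℝ) : ℝ :=
  2 ^ (s - (n:ℝ) - 2) * Real.pi ^ (-(n:ℝ) - ((m:ℝ)+1)/2) * s *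
    Gamma (((n:ℝ)+1+s)/2) * Gamma (((n:ℝ)+(m:ℝ)+s)/2) / Gamma (1-s)

/-- The sharp Sobolev constant `S_{n,m,s}`. -/
def SC (n m : ℕ) (s : ℝ) : ℝ :=
  4 ^ (s * (Qh n m + 2*(n:ℝ)) / Qh n m) * Real.pi ^ (s * (2*(n:ℝ)+(m:ℝ)) / Qh n m) *
    (Gamma (((n:ℝ)+1+s)/2) * Gamma (((n:ℝ)+(m:ℝ)+s)/2) /
      (Gamma (((n:ℝ)+1-s)/2) * Gamma (((n:ℝ)+(m:ℝ)-s)/2))) *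
    (Gamma ((n:ℝ)+(m:ℝ)/2) / Gamma (2*(n:ℝ)+(m:ℝ))) ^ (2*s / Qh n m)

/-- The Green's-function constant `c_{n,m,s}`. -/
def cC (n m : ℕ) (s : ℝ) : ℝ :=
  Gamma (((n:ℝ)+1-s)/2) * Gamma (((n:ℝ)+(m:ℝ)-s)/2) /
    (2 ^ ((n:ℝ)+1+s) * Real.pi ^ ((n:ℝ)+((m:ℝ)+1)/2) * Gamma s)

/-- The sharp Hardy constant `N_{n,m,s}`. -/
def NC (n m : ℕ) (s : ℝ) : ℝ :=
  4 ^ s * Gamma (((n:ℝ)+1+s)/2) * Gamma (((n:ℝ)+(m:ℝ)+s)/2) /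
    (Gamma (((n:ℝ)+1-s)/2) * Gamma (((n:ℝ)+(m:ℝ)-s)/2))

/-- The energy `E_s[f]` (ground-state representation of `∫ f 𝓛_s f`). -/
def Es {n m : ℕ} (U : Fin m → Matrix (Fin (2*n)) (Fin (2*n)) ℝ) (s : ℝ)
    (f : HG n m → ℝ) : ℝ :=
  aC n m s * ∫ ξ : HG n m, ∫ η : HG n m,
    |f ξ - f η| ^ 2 * hnorm (gmul U (ginv η) ξ) ^ (-(Qh n m + 2*s))

/-- `B(z,w) = (1+|z|²/4)² + |w|²`. -/
def Bfun {n m : ℕ} (ξ : HG n m) : ℝ := (1 + zsq ξ.1/4)^2 + zsq ξ.2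

/-- The extremal function `U(z,w) = B(z,w)^{-(Q-2s)/4}`. -/
def Ufun {n m : ℕ} (s : ℝ) (ξ : HG n m) : ℝ := Bfun ξ ^ (-(Qh n m - 2*s)/4)

/-- The Jacobian of the Cayley transform `J(z,w) = B(z,w)^{-Q/2}`. -/
def Jc {n m : ℕ} (ξ : HG n m) : ℝ := Bfun ξ ^ (-(Qh n m)/2)

/-- The functions `ω_j`, `j = 1,…,2n+m+1`. -/
def omegaF {n m : ℕ} (U : Fin m → Matrix (Fin (2*n)) (Fin (2*n)) ℝ)
    (j : Fin (2*n + m + 1)) (ξ : HG n m) : ℝ :=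
  if h : (j : ℕ) < 2*n then
    ((1 + zsq ξ.1 / 4) * ξ.1 ⟨j, h⟩ + ∑ k, ξ.2 k * ((U k).mulVec ξ.1) ⟨j, h⟩) / Bfun ξ
  else if h2 : (j : ℕ) < 2*n + m then
    2 * ξ.2 ⟨(j : ℕ) - 2*n, by omega⟩ / Bfun ξ
  else
    (1 - (zsq ξ.1)^2/16 - zsq ξ.2) / Bfun ξ

/-- The function `ω₁`. -/
def omega1 {n m : ℕ} (hn : 0 < n) (U : Fin m → Matrix (Fin (2*n)) (Fin (2*n)) ℝ)
    (ξ : HG n m) : ℝ :=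
  ((1 + zsq ξ.1 / 4) * ξ.1 ⟨0, by omega⟩ + ∑ k, ξ.2 k * ((U k).mulVec ξ.1) ⟨0, by omega⟩) /
    Bfun ξ

/-- `Σ_{j=1}^{2n+m+1} ω_j² = 1`. -/
theorem sum_omega_sq_eq_one (n m : ℕ) (hn : 0 < n) (hm : 0 < m)
    (U : Fin m → Matrix (Fin (2*n)) (Fin (2*n)) ℝ) (hU : IsHType U)
    (ξ : HG n m) :
    ∑ j : Fin (2*n + m + 1), omegaF U j ξ ^ 2 = 1 := by
  obtain ⟨hskew, horth, hanti⟩ := hU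
  obtain ⟨z, w⟩ := ξ
  have hS : 0 ≤ zsq z := Finset.sum_nonneg fun i _ => sq_nonneg _
  have hT : 0 ≤ zsq w := Finset.sum_nonneg fun i _ => sq_nonneg _
  have hBpos : (0:ℝ) < Bfun (z, w) := by
    have : (1:ℝ) ≤ (1 + zsq z/4)^2 := by nlinarith
    unfold Bfun; dsimp; nlinarith
  have hB : Bfun (z, w) ≠ 0 := ne_of_gt hBpos
  -- helper : M.mulVec u ⬝ᵥ v = u ⬝ᵥ Mᵀ.mulVec v
  have helper : ∀ (M : Matrix (Fin (2*n)) (Fin (2*n)) ℝ) (u v : Fin (2*n) → ℝ),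
      M.mulVec u ⬝ᵥ v = u ⬝ᵥ Mᵀ.mulVec v := by
    intro M u v
    rw [Matrix.dotProduct_mulVec, Matrix.vecMul_transpose]
  have hdot : ∀ k, z ⬝ᵥ (U k).mulVec z = 0 := by
    intro k
    have h1 : (U k).mulVec z ⬝ᵥ z = z ⬝ᵥ (U k)ᵀ.mulVec z := helper _ _ _
    rw [hskew k, Matrix.neg_mulVec, dotProduct_neg] at h1
    rw [dotProduct_comm] at h1
    linarith
  have hDD : ∀ k l, (U k).mulVec z ⬝ᵥ (U l).mulVec z = if k = l then zsq z else 0 := by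
    intro k l
    have hD : ∀ a b, (U a).mulVec z ⬝ᵥ (U b).mulVec z = z ⬝ᵥ ((U a)ᵀ * U b).mulVec z := by
      intro a b
      rw [helper, Matrix.mulVec_mulVec]
    by_cases hkl : k = l
    · subst hkl
      have h1 : (U k)ᵀ * U k = 1 := mul_eq_one_comm.mp (horth k)
      simp only [if_true, hD, h1, Matrix.one_mulVec]
      simp [dotProduct, zsq, sq]
    · have h0 : (U k)ᵀ * U l + (U l)ᵀ * U k = 0 := by
        rw [hskew k, hskew l]
        have := hanti k l hkl
        simp only [Matrix.neg_mul]
        linear_combination (norm := noncomm_ring) -this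
      have hsymm : (U l).mulVec z ⬝ᵥ (U k).mulVec z = (U k).mulVec z ⬝ᵥ (U l).mulVec z :=
        dotProduct_comm _ _
      have h2 : (U k).mulVec z ⬝ᵥ (U l).mulVec z + (U l).mulVec z ⬝ᵥ (U k).mulVec z = 0 := by
        rw [hD k l, hD l k, ← dotProduct_add, ← Matrix.add_mulVec, h0,
          Matrix.zero_mulVec, dotProduct_zero]
      rw [if_neg hkl]
      linarith [hsymm, h2]
  set A : ℝ := 1 + zsq z / 4 with hA
  -- the three partial sums
  have hsum1 : ∑ j : Fin (2*n), (A * z j + ∑ k, w k * (U k).mulVec z j)^2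
      = (A^2 + zsq w) * zsq z := by
    have e1 : ∀ j : Fin (2*n), (A * z j + ∑ k, w k * (U k).mulVec z j)^2
        = A^2 * (z j)^2 + 2*A*(z j * ∑ k, w k * (U k).mulVec z j)
          + (∑ k, w k * (U k).mulVec z j)^2 := by intro j; ring
    simp only [e1, Finset.sum_add_distrib]
    have h1 : ∑ j : Fin (2*n), A^2 * (z j)^2 = A^2 * zsq z := by
      rw [← Finset.mul_sum]; rfl
    have h2 : ∑ j : Fin (2*n), 2*A*(z j * ∑ k, w k * (U k).mulVec z j) = 0 := by
      rw [← Finset.mul_sum]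
      have : ∑ j : Fin (2*n), z j * ∑ k, w k * (U k).mulVec z j = 0 := by
        simp_rw [Finset.mul_sum]
        rw [Finset.sum_comm]
        have : ∀ k : Fin m, ∑ j : Fin (2*n), z j * (w k * (U k).mulVec z j) = 0 := by
          intro k
          have := hdot k
          simp only [dotProduct] at this
          calc ∑ j : Fin (2*n), z j * (w k * (U k).mulVec z j)
              = w k * ∑ j : Fin (2*n), z j * (U k).mulVec z j := by
                rw [Finset.mul_sum]; congr 1; funext j; ring
            _ = 0 := by rw [this]; ring
        simp [this]
      rw [this, mul_zero]
    have h3 : ∑ j : Fin (2*n), (∑ k, w k * (U k).mulVec z j)^2 = zsq w * zsq z := by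
      have e2 : ∀ j : Fin (2*n), (∑ k, w k * (U k).mulVec z j)^2
          = ∑ k, ∑ l, (w k * w l) * ((U k).mulVec z j * (U l).mulVec z j) := by
        intro j
        rw [sq, Finset.sum_mul_sum]
        congr 1; funext k; congr 1; funext l; ring
      simp only [e2]
      rw [Finset.sum_comm]
      have e3 : ∀ k : Fin m, ∑ j : Fin (2*n), ∑ l : Fin m,
          (w k * w l) * ((U k).mulVec z j * (U l).mulVec z j) = w k ^ 2 * zsq z := by
        intro k
        rw [Finset.sum_comm]
        have e4 : ∀ l : Fin m, ∑ j : Fin (2*n),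
            (w k * w l) * ((U k).mulVec z j * (U l).mulVec z j)
            = (w k * w l) * ((U k).mulVec z ⬝ᵥ (U l).mulVec z) := by
          intro l
          rw [dotProduct, Finset.mul_sum]
        simp only [e4, hDD, mul_ite, mul_zero]
        rw [Finset.sum_ite_eq]
        simp [sq]
      simp only [e3]
      rw [← Finset.sum_mul]; rfl
    rw [h1, h2, h3]; ring
  have hsum2 : ∑ r : Fin m, (2 * w r)^2 = 4 * zsq w := by
    simp only [mul_pow]
    rw [← Finset.mul_sum]
    norm_num [zsq]
  -- split the sum
  have hsplit : ∑ j : Fin (2*n + m + 1), omegaF U j (z, w) ^ 2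
      = (∑ j : Fin (2*n), ((A * z j + ∑ k, w k * (U k).mulVec z j)/Bfun (z,w))^2)
        + (∑ r : Fin m, (2 * w r / Bfun (z,w))^2)
        + ((1 - (zsq z)^2/16 - zsq w)/Bfun (z,w))^2 := by
    rw [Fin.sum_univ_castSucc, Fin.sum_univ_add]
    congr 1
    · congr 1
      · apply Finset.sum_congr rfl
        intro i _
        have hi : ((Fin.castSucc (Fin.castAdd m i) : Fin (2*n+m+1)) : ℕ) < 2*n := by
          simp [i.isLt]
        rw [omegaF, dif_pos hi]
        congr 2
      · apply Finset.sum_congr rfl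
        intro r _
        have h1 : ¬ ((Fin.castSucc (Fin.natAdd (2*n) r) : Fin (2*n+m+1)) : ℕ) < 2*n := by
          simp
        have h2 : ((Fin.castSucc (Fin.natAdd (2*n) r) : Fin (2*n+m+1)) : ℕ) < 2*n + m := by
          simp [r.isLt]
        rw [omegaF, dif_neg h1, dif_pos h2]
        congr 3
        simp
    · have h1 : ¬ ((Fin.last (2*n+m) : Fin (2*n+m+1)) : ℕ) < 2*n := by simp
      have h2 : ¬ ((Fin.last (2*n+m) : Fin (2*n+m+1)) : ℕ) < 2*n + m := by simp
      rw [omegaF, dif_neg h1, dif_neg h2]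
  rw [hsplit]
  simp only [div_pow]
  rw [← Finset.sum_div, ← Finset.sum_div, hsum1, hsum2]
  rw [← add_div, ← add_div]
  rw [div_eq_one_iff_eq (by positivity)]
  have hBval : Bfun (z, w) = A^2 + zsq w := rfl
  rw [hBval, hA]
  ring
end
end

section
/- For positive integers n, m and Q = 2n+2m, one has ∫_{ℝ^{2n}×ℝ^m} [(1+|z|²/4)²+|w|²]^{-Q/2} dz dw = 4^n π^{n+m/2} Γ(n+m/2)/Γ(2n+m). (The total mass of the Jacobian of the Cayley transform, equal to the volume of the sphere S^{2n+m} expressed through the Cayley transform.) -/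
open MeasureTheory Real Matrix

noncomputable section

open Set in
private lemma my_real_beta {a b : ℝ} (ha : 0 < a) (hb : 0 < b) :
    ∫ x in Ioo (0:ℝ) 1, x ^ (a-1) * (1-x) ^ (b-1) = Gamma a * Gamma b / Gamma (a+b) := by
  have h1 : Complex.betaIntegral a b = ((∫ x in (0:ℝ)..1, x ^ (a-1) * (1-x) ^ (b-1) : ℝ) : ℂ) := by
    rw [Complex.betaIntegral, ← intervalIntegral.integral_ofReal]
    refine intervalIntegral.integral_congr fun x hx => ?_
    rw [Set.uIcc_of_le (by norm_num)] at hx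
    rw [Complex.ofReal_mul, Complex.ofReal_cpow hx.1,
      Complex.ofReal_cpow (by linarith [hx.2] : (0:ℝ) ≤ 1 - x)]
    push_cast
    ring_nf
  have h2 := Complex.Gamma_mul_Gamma_eq_betaIntegral (s := (a:ℂ)) (t := (b:ℂ))
    (by simpa using ha) (by simpa using hb)
  rw [h1] at h2
  have h3 : ((Gamma a * Gamma b : ℝ) : ℂ)
      = ((Gamma (a+b) * ∫ x in (0:ℝ)..1, x ^ (a-1) * (1-x) ^ (b-1) : ℝ) : ℂ) := by
    push_cast
    rw [← Complex.Gamma_ofReal, ← Complex.Gamma_ofReal, ← Complex.Gamma_ofReal] at *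
    simpa using h2
  have h4 := Complex.ofReal_injective h3
  have hg : Gamma (a+b) ≠ 0 := (Gamma_pos_of_pos (by linarith)).ne'
  rw [intervalIntegral.integral_of_le (by norm_num), integral_Ioc_eq_integral_Ioo] at h4
  field_simp
  linarith [h4]

open Set in
private lemma my_beta_Ioi {a b : ℝ} (ha : 0 < a) (hb : 0 < b) :
    ∫ x in Ioi (0:ℝ), x ^ (a-1) * (1+x) ^ (-(a+b)) = Gamma a * Gamma b / Gamma (a+b) := by
  have himg : (fun u => u / (1-u)) '' Ioo (0:ℝ) 1 = Ioi 0 := by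
    ext y; constructor
    · rintro ⟨u, hu, rfl⟩
      exact div_pos hu.1 (by linarith [hu.2])
    · intro hy
      refine ⟨y / (1+y), ⟨div_pos hy (by linarith [mem_Ioi.mp hy]), ?_⟩, ?_⟩
      · rw [div_lt_one (by linarith [mem_Ioi.mp hy])]; linarith
      · have h1y : (1:ℝ) + y ≠ 0 := by have := mem_Ioi.mp hy; positivity
        field_simp
        ring
  have hderiv : ∀ u ∈ Ioo (0:ℝ) 1, HasDerivWithinAt (fun u => u / (1-u))
      (((1-u)^2)⁻¹) (Ioo (0:ℝ) 1) u := by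
    intro u hu
    have h : (1:ℝ) - u ≠ 0 := ne_of_gt (by linarith [hu.2])
    have := (hasDerivAt_id u).div ((hasDerivAt_id u).const_sub 1) h
    refine this.hasDerivWithinAt.congr_deriv ?_
    simp only [id]
    field_simp
    ring
  have hinj : InjOn (fun u => u / (1-u)) (Ioo (0:ℝ) 1) := by
    intro u hu v hv h
    have hu1 : (1:ℝ) - u ≠ 0 := ne_of_gt (by linarith [hu.2])
    have hv1 : (1:ℝ) - v ≠ 0 := ne_of_gt (by linarith [hv.2])
    field_simp at h
    nlinarith [h]
  have himage := integral_image_eq_integral_abs_deriv_smul measurableSet_Ioo hderiv hinj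
    (fun x => x ^ (a-1) * (1+x) ^ (-(a+b)))
  rw [himg] at himage
  rw [himage, ← my_real_beta ha hb]
  refine setIntegral_congr_fun measurableSet_Ioo fun u hu => ?_
  have h0 : (0:ℝ) < u := hu.1
  have h1 : (0:ℝ) < 1 - u := by linarith [hu.2]
  have e1 : 1 + u / (1-u) = (1-u)⁻¹ := by field_simp; ring
  have e2 : ((1-u)⁻¹) ^ (-(a+b)) = (1-u) ^ (a+b) := by
    rw [← rpow_neg_one (1-u), ← rpow_mul h1.le]; norm_num
  have e3 : (((1-u)^2)⁻¹ : ℝ) = (1-u) ^ (-(2:ℝ)) := by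
    rw [rpow_neg h1.le, show ((2:ℝ)) = ((2:ℕ):ℝ) by norm_num, rpow_natCast]
  rw [smul_eq_mul, abs_of_pos (show (0:ℝ) < ((1-u)^2)⁻¹ by positivity), e1, e2, e3,
    div_rpow h0.le h1.le, div_eq_mul_inv, ← rpow_neg h1.le,
    show b - 1 = -2 + (-(a-1) + (a+b)) by ring, rpow_add h1, rpow_add h1]
  ring_nf
  have e4 : ((1:ℝ)-u) ^ ((1:ℝ)-a) * ((1-u) ^ a * (1-u) ^ b) = (1-u) ^ ((1:ℝ)+b) := by
    rw [← rpow_add h1, ← rpow_add h1]; ring_nf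
  linear_combination ((1-u) ^ (-2:ℝ) * u ^ (-1+a)) * e4

open Set in
private lemma my_one_dim {c p : ℝ} (hc : 0 < c) (hp : c/2 < p) :
    ∫ y in Ioi (0:ℝ), y ^ (c-1) * (1+y^2) ^ (-p)
      = Gamma (c/2) * Gamma (p - c/2) / (2 * Gamma p) := by
  have h2 : (2:ℝ) ≠ 0 := two_ne_zero
  have key := integral_comp_rpow_Ioi (fun x => x ^ (c/2-1) * (1+x) ^ (-p)) h2
  have hbeta := my_beta_Ioi (a := c/2) (b := p - c/2) (by linarith) (by linarith)
  have hs : c/2 + (p - c/2) = p := by ring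
  rw [hs] at hbeta
  rw [hbeta] at key
  have lhs_eq : ∀ y ∈ Ioi (0:ℝ),
      (|(2:ℝ)| * y ^ ((2:ℝ)-1)) • ((y ^ (2:ℝ)) ^ (c/2-1) * (1 + y ^ (2:ℝ)) ^ (-p))
        = 2 * (y ^ (c-1) * (1+y^2) ^ (-p)) := by
    intro y hy
    have hy0 : (0:ℝ) < y := hy
    rw [smul_eq_mul, abs_two, ← rpow_natCast y 2, ← rpow_mul hy0.le]
    rw [show (2:ℝ) * (c/2-1) = c - 2 by ring, show ((2:ℝ)) - 1 = 1 by norm_num, rpow_one,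
      show c - 1 = 1 + (c - 2) by ring, rpow_add hy0, rpow_one]
    push_cast
    ring
  rw [setIntegral_congr_fun measurableSet_Ioi lhs_eq, integral_const_mul] at key
  have := Gamma_pos_of_pos (show (0:ℝ) < p by linarith)
  field_simp at key ⊢
  linarith

open Set in
private lemma my_euclid_int (d : ℕ) (hd : 0 < d) {p : ℝ} (hp : (d:ℝ)/2 < p) :
    ∫ x : EuclideanSpace ℝ (Fin d), (1 + ‖x‖^2) ^ (-p)
      = π ^ ((d:ℝ)/2) * Gamma (p - (d:ℝ)/2) / Gamma p := by
  haveI : Nonempty (Fin d) := ⟨⟨0, hd⟩⟩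
  haveI : Nontrivial (EuclideanSpace ℝ (Fin d)) := by
    refine ⟨0, EuclideanSpace.single ⟨0, hd⟩ 1, ?_⟩
    intro h
    have := congrArg (fun f => f ⟨0, hd⟩) h
    simp [EuclideanSpace.single] at this
  have key := integral_fun_norm_addHaar (volume : Measure (EuclideanSpace ℝ (Fin d)))
    (fun r : ℝ => (1 + r^2) ^ (-p))
  have hdim : Module.finrank ℝ (EuclideanSpace ℝ (Fin d)) = d := finrank_euclideanSpace_fin
  rw [hdim] at key
  have hball : (volume (Metric.ball (0 : EuclideanSpace ℝ (Fin d)) 1)).toReal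
      = π ^ ((d:ℝ)/2) / Gamma ((d:ℝ)/2 + 1) := by
    rw [EuclideanSpace.volume_ball]
    simp only [Fintype.card_fin]
    rw [ENNReal.ofReal_one, one_pow, one_mul, ENNReal.toReal_ofReal (by positivity),
      sqrt_eq_rpow, ← Real.rpow_natCast (π ^ (1/(2:ℝ))) d, ← rpow_mul pi_pos.le]
    ring_nf
  rw [measureReal_def, hball] at key
  have hIoi : ∫ y in Ioi (0:ℝ), y ^ (d - 1) • (1 + y^2) ^ (-p)
      = Gamma ((d:ℝ)/2) * Gamma (p - (d:ℝ)/2) / (2 * Gamma p) := by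
    rw [← my_one_dim (by positivity : (0:ℝ) < (d:ℝ)) hp]
    refine setIntegral_congr_fun measurableSet_Ioi fun y hy => ?_
    have hy0 : (0:ℝ) < y := hy
    rw [smul_eq_mul, ← rpow_natCast y (d-1), Nat.cast_sub hd, Nat.cast_one]
  rw [hIoi] at key
  rw [key]
  have hΓ : Gamma ((d:ℝ)/2 + 1) = ((d:ℝ)/2) * Gamma ((d:ℝ)/2) := by
    rw [Gamma_add_one (by positivity)]
  have hΓd : Gamma ((d:ℝ)/2) ≠ 0 := (Gamma_pos_of_pos (by positivity)).ne'
  have hΓp : Gamma p ≠ 0 :=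
    (Gamma_pos_of_pos (by linarith [show (0:ℝ) ≤ (d:ℝ)/2 by positivity])).ne'
  have hd0 : (0:ℝ) < (d:ℝ) := by positivity
  rw [hΓ, nsmul_eq_mul, smul_eq_mul]
  field_simp

private lemma my_pi_int (d : ℕ) (hd : 0 < d) {p : ℝ} (hp : (d:ℝ)/2 < p) :
    ∫ x : Fin d → ℝ, (1 + zsq x) ^ (-p)
      = π ^ ((d:ℝ)/2) * Gamma (p - (d:ℝ)/2) / Gamma p := by
  rw [← my_euclid_int d hd hp]
  rw [← (EuclideanSpace.volume_preserving_symm_measurableEquiv_toLp (Fin d)).integral_comp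
    (MeasurableEquiv.toLp 2 (Fin d → ℝ)).symm.measurableEmbedding (fun x => (1 + zsq x) ^ (-p))]
  refine integral_congr_ae (Filter.Eventually.of_forall fun x => ?_)
  simp only [zsq]
  rw [← Real.sq_sqrt
    (show (0:ℝ) ≤ ∑ i, ((MeasurableEquiv.toLp 2 (Fin d → ℝ)).symm x i)^2 by positivity)]
  rw [EuclideanSpace.norm_eq]
  simp [sq_abs]

private lemma my_pi_int_scaled (d : ℕ) (hd : 0 < d) {p R : ℝ} (hp : (d:ℝ)/2 < p) (hR : 0 < R) :
    ∫ x : Fin d → ℝ, (R^2 + zsq x) ^ (-p)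
      = R ^ ((d:ℝ) - 2*p) * (π ^ ((d:ℝ)/2) * Gamma (p - (d:ℝ)/2) / Gamma p) := by
  have hzsq : ∀ x : Fin d → ℝ, zsq (R⁻¹ • x) = R⁻¹^2 * zsq x := by
    intro x
    simp [zsq, Finset.mul_sum, mul_pow]
  have hpt : ∀ x : Fin d → ℝ, (R^2 + zsq x) ^ (-p)
      = (R^2) ^ (-p) * (1 + zsq (R⁻¹ • x)) ^ (-p) := by
    intro x
    have hz : 0 ≤ zsq x := Finset.sum_nonneg fun i _ => sq_nonneg _
    rw [hzsq, ← mul_rpow (by positivity) (by positivity)]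
    congr 1
    field_simp
  simp_rw [hpt]
  rw [integral_const_mul, Measure.integral_comp_smul volume (fun x => (1 + zsq x) ^ (-p)) R⁻¹,
    my_pi_int d hd hp, Module.finrank_fin_fun]
  rw [smul_eq_mul, ← mul_assoc]
  congr 1
  rw [inv_pow, inv_inv, abs_of_pos (by positivity), ← rpow_natCast R 2, ← rpow_mul hR.le,
    ← rpow_natCast R d, ← rpow_add hR]
  norm_num
  ring_nf

private lemma my_zsq_nonneg {k : ℕ} (z : Fin k → ℝ) : 0 ≤ zsq z :=
  Finset.sum_nonneg fun i _ => sq_nonneg _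

private lemma my_continuous_zsq {k : ℕ} : Continuous (zsq : (Fin k → ℝ) → ℝ) :=
  continuous_finset_sum _ fun i _ => (continuous_apply i).pow 2

private lemma my_sup_sq_le_zsq {k : ℕ} (z : Fin k → ℝ) : ‖z‖^2 ≤ zsq z := by
  have h : ‖z‖ ≤ Real.sqrt (zsq z) := by
    rw [pi_norm_le_iff_of_nonneg (Real.sqrt_nonneg _)]
    intro i
    rw [Real.norm_eq_abs, ← Real.sqrt_sq_eq_abs]
    exact Real.sqrt_le_sqrt (Finset.single_le_sum (fun j _ => sq_nonneg (z j)) (Finset.mem_univ i))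
  calc ‖z‖^2 ≤ Real.sqrt (zsq z) ^ 2 := by
        exact pow_le_pow_left₀ (norm_nonneg _) h 2
    _ = zsq z := Real.sq_sqrt (my_zsq_nonneg z)

private lemma my_half_le_B {n m : ℕ} (ξ : HG n m) :
    (1/2 : ℝ) * (1 + ‖ξ‖^2) ≤ (1 + zsq ξ.1/4)^2 + zsq ξ.2 := by
  have h1 := my_sup_sq_le_zsq ξ.1
  have h2 := my_sup_sq_le_zsq ξ.2
  have hξ : ‖ξ‖^2 ≤ zsq ξ.1 + zsq ξ.2 := by
    rw [Prod.norm_def]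
    rcases max_cases ‖ξ.1‖ ‖ξ.2‖ with ⟨he, _⟩ | ⟨he, _⟩ <;> rw [he] <;>
      nlinarith [my_zsq_nonneg ξ.1, my_zsq_nonneg ξ.2]
  nlinarith [my_zsq_nonneg ξ.1, my_zsq_nonneg ξ.2]

private lemma my_integrable_main (n m : ℕ) (hn : 0 < n) (hm : 0 < m) :
    Integrable (fun ξ : HG n m => ((1 + zsq ξ.1/4)^2 + zsq ξ.2) ^ (-((n:ℝ)+(m:ℝ)))) := by
  haveI : (volume : Measure (HG n m)).IsAddHaarMeasure := by
    have : ((volume : Measure (Fin (2*n) → ℝ)).prod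
        (volume : Measure (Fin m → ℝ))).IsAddHaarMeasure :=
      Measure.prod.instIsAddHaarMeasure _ _
    rwa [← Measure.volume_eq_prod] at this
  have hfin : (Module.finrank ℝ (HG n m) : ℝ) < 2*((n:ℝ)+m) := by
    rw [Module.finrank_prod, Module.finrank_fin_fun, Module.finrank_fin_fun]
    have hm' : (0:ℝ) < m := by exact_mod_cast hm
    push_cast
    linarith
  have hint := (integrable_rpow_neg_one_add_norm_sq (E := HG n m) (μ := volume) hfin).const_mul
    ((2:ℝ) ^ ((n:ℝ)+(m:ℝ)))
  refine hint.mono' ?_ (Filter.Eventually.of_forall fun ξ => ?_)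
  · refine (Continuous.rpow_const ?_ fun ξ => Or.inl ?_).aestronglyMeasurable
    · exact ((continuous_const.add ((my_continuous_zsq.comp continuous_fst).div_const 4)).pow
        2).add (my_continuous_zsq.comp continuous_snd)
    · nlinarith [my_zsq_nonneg ξ.1, my_zsq_nonneg ξ.2]
  · have hB : (0:ℝ) < (1 + zsq ξ.1/4)^2 + zsq ξ.2 := by
      nlinarith [my_zsq_nonneg ξ.1, my_zsq_nonneg ξ.2]
    have hhalf : (0:ℝ) < (1/2:ℝ) * (1 + ‖ξ‖^2) := by positivity
    rw [Real.norm_eq_abs, abs_of_nonneg (rpow_nonneg hB.le _)]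
    calc ((1 + zsq ξ.1/4)^2 + zsq ξ.2) ^ (-((n:ℝ)+(m:ℝ)))
        ≤ ((1/2:ℝ) * (1 + ‖ξ‖^2)) ^ (-((n:ℝ)+(m:ℝ))) :=
          Real.rpow_le_rpow_of_nonpos hhalf (my_half_le_B ξ) (neg_nonpos.mpr (by positivity))
      _ = (2:ℝ) ^ ((n:ℝ)+(m:ℝ)) * ((1:ℝ) + ‖ξ‖^2) ^ (-(2*((n:ℝ)+(m:ℝ)))/2) := by
          rw [Real.mul_rpow (by norm_num) (by positivity),
            show (-(2*((n:ℝ)+(m:ℝ)))/2) = -((n:ℝ)+(m:ℝ)) by ring]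
          congr 1
          rw [one_div, Real.inv_rpow zero_le_two, Real.rpow_neg zero_le_two, inv_inv]

/-- the total mass of the Jacobian of the Cayley transform. -/
theorem cayley_jacobian_mass (n m : ℕ) (hn : 0 < n) (hm : 0 < m) :
    ∫ ξ : HG n m, ((1 + zsq ξ.1/4)^2 + zsq ξ.2) ^ (-(Qh n m)/2)
      = 4 ^ n * Real.pi ^ ((n:ℝ) + (m:ℝ)/2) * Gamma ((n:ℝ) + (m:ℝ)/2) /
          Gamma (2*(n:ℝ) + (m:ℝ)) := by
  have hn' : (0:ℝ) < n := by exact_mod_cast hn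
  have hm' : (0:ℝ) < m := by exact_mod_cast hm
  have hQ : -(Qh n m)/2 = -((n:ℝ)+(m:ℝ)) := by
    rw [Qh]; push_cast; ring
  simp_rw [hQ]
  have hInt : Integrable (fun ξ : HG n m => ((1 + zsq ξ.1/4)^2 + zsq ξ.2) ^ (-((n:ℝ)+(m:ℝ))))
      ((volume : Measure (Fin (2*n) → ℝ)).prod (volume : Measure (Fin m → ℝ))) := by
    rw [← Measure.volume_eq_prod]
    exact my_integrable_main n m hn hm
  have hsplit : ∫ ξ : HG n m, ((1 + zsq ξ.1/4)^2 + zsq ξ.2) ^ (-((n:ℝ)+(m:ℝ)))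
      = ∫ z : Fin (2*n) → ℝ, ∫ w : Fin m → ℝ,
          ((1 + zsq z/4)^2 + zsq w) ^ (-((n:ℝ)+(m:ℝ))) := by
    rw [Measure.volume_eq_prod]
    exact integral_prod _ hInt
  rw [hsplit]
  set Cm : ℝ := π ^ ((m:ℝ)/2) * Gamma (((n:ℝ)+(m:ℝ)) - (m:ℝ)/2) / Gamma ((n:ℝ)+(m:ℝ)) with hCm
  have hinner : ∀ z : Fin (2*n) → ℝ,
      ∫ w : Fin m → ℝ, ((1 + zsq z/4)^2 + zsq w) ^ (-((n:ℝ)+(m:ℝ)))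
        = (1 + zsq z/4) ^ (-(2*(n:ℝ)+(m:ℝ))) * Cm := by
    intro z
    have hR : (0:ℝ) < 1 + zsq z/4 := by nlinarith [my_zsq_nonneg z]
    rw [my_pi_int_scaled m hm (p := (n:ℝ)+(m:ℝ)) (by linarith) hR,
      show ((m:ℝ) - 2*((n:ℝ)+(m:ℝ))) = -(2*(n:ℝ)+(m:ℝ)) by ring]
  simp_rw [hinner]
  rw [integral_mul_const]
  have houter : ∫ z : Fin (2*n) → ℝ, (1 + zsq z/4) ^ (-(2*(n:ℝ)+(m:ℝ)))
      = 4 ^ n * (π ^ ((n:ℝ)) * Gamma ((n:ℝ)+(m:ℝ)) / Gamma (2*(n:ℝ)+(m:ℝ))) := by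
    have hpt : ∀ z : Fin (2*n) → ℝ, (1 + zsq z/4) ^ (-(2*(n:ℝ)+(m:ℝ)))
        = (1 + zsq ((2:ℝ)⁻¹ • z)) ^ (-(2*(n:ℝ)+(m:ℝ))) := by
      intro z
      congr 2
      simp [zsq, Finset.mul_sum, mul_pow]
      rw [Finset.sum_div]
      refine Finset.sum_congr rfl fun i _ => ?_
      ring
    simp_rw [hpt]
    rw [Measure.integral_comp_smul volume
      (fun x : Fin (2*n) → ℝ => (1 + zsq x) ^ (-(2*(n:ℝ)+(m:ℝ)))) (2:ℝ)⁻¹,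
      my_pi_int (2*n) (by omega) (p := 2*(n:ℝ)+(m:ℝ)) (by push_cast; linarith),
      Module.finrank_fin_fun]
    rw [smul_eq_mul]
    congr 2
    · rw [inv_pow, inv_inv, abs_of_pos (by positivity), pow_mul]
      norm_num
    · push_cast; ring_nf
  rw [houter, hCm]
  have hΓnm : Gamma ((n:ℝ)+(m:ℝ)) ≠ 0 := (Gamma_pos_of_pos (by linarith)).ne'
  have hΓ2nm : Gamma (2*(n:ℝ)+(m:ℝ)) ≠ 0 := (Gamma_pos_of_pos (by linarith)).ne'
  rw [show ((n:ℝ)+(m:ℝ)) - (m:ℝ)/2 = (n:ℝ)+(m:ℝ)/2 by ring]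
  rw [show π ^ ((n:ℝ)+(m:ℝ)/2) = π ^ ((n:ℝ)) * π ^ ((m:ℝ)/2) from (rpow_add pi_pos _ _)]
  field_simp
end
end
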